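/- Let n ≥ 5 and 0 < a < 3, and let g be the solution on (0,2R) of g'' + ((n-1)/r) g' + 1/(1+r^a) = 0 given by the variation-of-parameters formula g(r) = ∫_r^{2R} ρ^{1-n} ∫_0^ρ s^{n-1}/(1+s^a) ds dρ (the case of potential identically zero). Then g ≥ 0, g'(0⁺) = 0, g(2R) = 0, and g(0) is bounded by C·(1 if a > 2; log R if a = 2; R^{2-a} if a < 2) for a constant C independent of R ≥ 2. -/

import Mathlib

open MeasureTheory intervalIntegral Set Filter

namespace Stmt14Aux

variable {n : ℕ} {a : ℝ}

noncomputable def f (n : ℕ) (a : ℝ) (s : ℝ) : ℝ := s ^ ((n : ℝ) - 1) / (1 + s ^ a)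

noncomputable def F (n : ℕ) (a : ℝ) (ρ : ℝ) : ℝ := ∫ s in (0:ℝ)..ρ, f n a s

noncomputable def H (n : ℕ) (a : ℝ) (ρ : ℝ) : ℝ := ρ ^ ((1:ℝ) - (n:ℝ)) * F n a ρ

lemma f_nonneg (ha : 0 < a) {s : ℝ} (hs : 0 ≤ s) : 0 ≤ f n a s := by
  unfold f
  have h1 : (0:ℝ) ≤ s ^ ((n:ℝ) - 1) := Real.rpow_nonneg hs _
  have h2 : (0:ℝ) ≤ s ^ a := Real.rpow_nonneg hs _
  positivity

lemma denom_pos (ha : 0 < a) {s : ℝ} (hs : 0 ≤ s) : (0:ℝ) < 1 + s ^ a := by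
  have h2 : (0:ℝ) ≤ s ^ a := Real.rpow_nonneg hs _
  linarith

lemma f_cont (hn : 5 ≤ n) (ha : 0 < a) : ContinuousOn (f n a) (Ici 0) := by
  have hn' : (5:ℝ) ≤ (n:ℝ) := by exact_mod_cast hn
  apply ContinuousOn.div
  · intro x hx
    exact (Real.continuousAt_rpow_const x _ (Or.inr (by linarith))).continuousWithinAt
  · intro x hx
    exact (continuousAt_const.add
      (Real.continuousAt_rpow_const x _ (Or.inr ha.le))).continuousWithinAt
  · intro x hx
    exact (denom_pos ha hx).ne'

lemma f_le (ha : 0 < a) {s : ℝ} (hs : 0 ≤ s) : f n a s ≤ s ^ ((n:ℝ) - 1) := by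
  unfold f
  exact div_le_self (Real.rpow_nonneg hs _) (by nlinarith [Real.rpow_nonneg hs a])

lemma f_le' (ha : 0 < a) {s : ℝ} (hs : 1 ≤ s) : f n a s ≤ s ^ ((n:ℝ) - 1 - a) := by
  have hs0 : (0:ℝ) < s := by linarith
  unfold f
  rw [div_le_iff₀ (denom_pos ha hs0.le)]
  have : s ^ ((n:ℝ) - 1 - a) * s ^ a = s ^ ((n:ℝ) - 1) := by
    rw [← Real.rpow_add hs0]; ring_nf
  nlinarith [Real.rpow_nonneg hs0.le ((n:ℝ) - 1 - a), Real.rpow_nonneg hs0.le a]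

lemma f_intble (hn : 5 ≤ n) (ha : 0 < a) {c d : ℝ} (hc : 0 ≤ c) (hd : 0 ≤ d) :
    IntervalIntegrable (f n a) volume c d := by
  apply ContinuousOn.intervalIntegrable
  exact (f_cont hn ha).mono (fun x hx => le_trans (le_min hc hd) hx.1)

lemma F_nonneg (ha : 0 < a) {ρ : ℝ} (hρ : 0 ≤ ρ) : 0 ≤ F n a ρ := by
  apply intervalIntegral.integral_nonneg hρ
  intro s hs
  exact f_nonneg ha hs.1

lemma F_le (hn : 5 ≤ n) (ha : 0 < a) {ρ : ℝ} (hρ : 0 ≤ ρ) :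
    F n a ρ ≤ ρ ^ (n:ℝ) / n := by
  have hn5 : (5:ℝ) ≤ (n:ℝ) := by exact_mod_cast hn
  have hn1 : (-1:ℝ) < (n:ℝ) - 1 := by linarith
  have h1 : F n a ρ ≤ ∫ s in (0:ℝ)..ρ, s ^ ((n:ℝ) - 1) := by
    apply intervalIntegral.integral_mono_on hρ (f_intble hn ha le_rfl hρ)
    · apply ContinuousOn.intervalIntegrable
      intro x hx
      exact (Real.continuousAt_rpow_const x _ (Or.inr (by linarith))).continuousWithinAt
    · intro s hs; exact f_le ha hs.1
  have h2 : ∫ s in (0:ℝ)..ρ, s ^ ((n:ℝ) - 1) = ρ ^ (n:ℝ) / n := by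
    rw [integral_rpow (Or.inl hn1)]
    have hne : (n:ℝ) ≠ 0 := by positivity
    rw [Real.zero_rpow (by linarith), sub_add_cancel]
    ring_nf
  linarith [h1, h2.le]


lemma rpow_intble {c p q : ℝ} (hp : 1 ≤ p) (hq : 1 ≤ q) :
    IntervalIntegrable (fun x : ℝ => x ^ c) volume p q := by
  apply ContinuousOn.intervalIntegrable
  intro x hx
  have hx1 : (1:ℝ) ≤ x := le_trans (le_min hp hq) hx.1
  exact (Real.continuousAt_rpow_const x c (Or.inl (by linarith))).continuousWithinAt

lemma F_le' (hn : 5 ≤ n) (ha0 : 0 < a) (ha3 : a < 3) {ρ : ℝ} (hρ : 1 ≤ ρ) :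
    F n a ρ ≤ 1 / n + ρ ^ ((n:ℝ) - a) / ((n:ℝ) - a) := by
  have hn5 : (5:ℝ) ≤ (n:ℝ) := by exact_mod_cast hn
  have hρ0 : (0:ℝ) < ρ := by linarith
  have hna : (0:ℝ) < (n:ℝ) - a := by linarith
  have hsplit : F n a ρ = F n a 1 + ∫ s in (1:ℝ)..ρ, f n a s := by
    unfold F
    rw [intervalIntegral.integral_add_adjacent_intervals
      (f_intble hn ha0 le_rfl zero_le_one) (f_intble hn ha0 zero_le_one hρ0.le)]
  have h1 : F n a 1 ≤ 1 / n := by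
    have := F_le hn ha0 (ρ := 1) zero_le_one
    simpa using this
  have h2 : (∫ s in (1:ℝ)..ρ, f n a s) ≤ ∫ s in (1:ℝ)..ρ, s ^ ((n:ℝ) - 1 - a) := by
    apply intervalIntegral.integral_mono_on hρ (f_intble hn ha0 zero_le_one hρ0.le)
      (rpow_intble le_rfl hρ)
    intro s hs; exact f_le' ha0 hs.1
  have h3 : (∫ s in (1:ℝ)..ρ, s ^ ((n:ℝ) - 1 - a)) = (ρ ^ ((n:ℝ) - a) - 1) / ((n:ℝ) - a) := by
    rw [integral_rpow (Or.inl (by linarith))]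
    rw [show (n:ℝ) - 1 - a + 1 = (n:ℝ) - a by ring, Real.one_rpow]
  have h4 : (ρ ^ ((n:ℝ) - a) - 1) / ((n:ℝ) - a) ≤ ρ ^ ((n:ℝ) - a) / ((n:ℝ) - a) := by
    gcongr; linarith
  linarith [hsplit, h1, h2, h3.le, h3.ge, h4]

lemma F_contAt (hn : 5 ≤ n) (ha : 0 < a) {x : ℝ} (hx : 0 < x) : ContinuousAt (F n a) x := by
  have hint : IntegrableOn (f n a) (uIcc 0 (x + 1)) volume := by
    rw [uIcc_of_le (by linarith)]
    exact ((f_cont hn ha).mono (fun y hy => hy.1)).integrableOn_Icc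
  have hc := intervalIntegral.continuousOn_primitive_interval hint
  rw [uIcc_of_le (by linarith)] at hc
  exact (hc.congr (fun y _ => rfl)).continuousAt (Icc_mem_nhds hx (by linarith))

lemma H_eq0 : H n a 0 = 0 := by
  unfold H F
  rw [intervalIntegral.integral_same, mul_zero]

lemma H_nonneg (ha : 0 < a) {ρ : ℝ} (hρ : 0 ≤ ρ) : 0 ≤ H n a ρ :=
  mul_nonneg (Real.rpow_nonneg hρ _) (F_nonneg ha hρ)

lemma H_le (hn : 5 ≤ n) (ha : 0 < a) {ρ : ℝ} (hρ : 0 ≤ ρ) : H n a ρ ≤ ρ / n := by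
  have hn5 : (5:ℝ) ≤ (n:ℝ) := by exact_mod_cast hn
  rcases eq_or_lt_of_le hρ with h | h
  · rw [← h, H_eq0]; simp
  · have h1 : H n a ρ ≤ ρ ^ ((1:ℝ) - (n:ℝ)) * (ρ ^ (n:ℝ) / n) :=
      mul_le_mul_of_nonneg_left (F_le hn ha hρ) (Real.rpow_nonneg hρ _)
    have h2 : ρ ^ ((1:ℝ) - (n:ℝ)) * (ρ ^ (n:ℝ) / n) = ρ / n := by
      rw [mul_div_assoc', ← Real.rpow_add h, show (1:ℝ) - (n:ℝ) + (n:ℝ) = 1 by ring,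
        Real.rpow_one]
    linarith [h2.le]

lemma H_contOn (hn : 5 ≤ n) (ha : 0 < a) : ContinuousOn (H n a) (Ici 0) := by
  intro x hx
  rcases eq_or_lt_of_le (show (0:ℝ) ≤ x from hx) with h | h
  · rw [← h]
    have h0 : H n a 0 = 0 := H_eq0
    unfold ContinuousWithinAt
    rw [h0]
    apply squeeze_zero' (t₀ := nhdsWithin 0 (Ici 0))
    · filter_upwards [self_mem_nhdsWithin] with ρ hρ
      exact H_nonneg ha hρ
    · filter_upwards [self_mem_nhdsWithin] with ρ hρ
      exact H_le hn ha hρ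
    · have : Filter.Tendsto (fun ρ : ℝ => ρ / (n:ℝ)) (nhds 0) (nhds (0 / (n:ℝ))) :=
        (continuous_id.div_const _).tendsto 0
      simpa using this.mono_left nhdsWithin_le_nhds
  · apply ContinuousAt.continuousWithinAt
    exact ((Real.continuousAt_rpow_const x _ (Or.inl h.ne')).mul (F_contAt hn ha h))

lemma H_intble (hn : 5 ≤ n) (ha : 0 < a) {c d : ℝ} (hc : 0 ≤ c) (hd : 0 ≤ d) :
    IntervalIntegrable (H n a) volume c d :=
  ((H_contOn hn ha).mono (fun x hx => le_trans (le_min hc hd) hx.1)).intervalIntegrable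

lemma H_le' (hn : 5 ≤ n) (ha0 : 0 < a) (ha3 : a < 3) {ρ : ℝ} (hρ : 1 ≤ ρ) :
    H n a ρ ≤ ρ ^ ((1:ℝ) - (n:ℝ)) / n + ρ ^ ((1:ℝ) - a) / ((n:ℝ) - a) := by
  have hρ0 : (0:ℝ) < ρ := by linarith
  have h1 : H n a ρ ≤ ρ ^ ((1:ℝ) - (n:ℝ)) * (1 / n + ρ ^ ((n:ℝ) - a) / ((n:ℝ) - a)) :=
    mul_le_mul_of_nonneg_left (F_le' hn ha0 ha3 hρ) (Real.rpow_nonneg hρ0.le _)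
  have h2 : ρ ^ ((1:ℝ) - (n:ℝ)) * (1 / n + ρ ^ ((n:ℝ) - a) / ((n:ℝ) - a)) =
      ρ ^ ((1:ℝ) - (n:ℝ)) / n + ρ ^ ((1:ℝ) - a) / ((n:ℝ) - a) := by
    rw [mul_add, mul_one_div, ← mul_div_assoc, ← Real.rpow_add hρ0,
      show (1:ℝ) - (n:ℝ) + ((n:ℝ) - a) = 1 - a by ring]
  linarith [h2.le]

end Stmt14Aux

open Stmt14Aux in
theorem stmt14 (n : ℕ) (hn : 5 ≤ n) (a : ℝ) (ha0 : 0 < a) (ha3 : a < 3)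
    (g : ℝ → ℝ → ℝ)
    (hg : ∀ R r : ℝ, g R r =
      ∫ ρ in r..(2 * R), ρ ^ ((1 : ℝ) - (n : ℝ)) *
        ∫ s in (0 : ℝ)..ρ, s ^ ((n : ℝ) - 1) / (1 + s ^ a)) :
    ∃ C : ℝ, 0 < C ∧ ∀ R ≥ (2 : ℝ),
      (∀ r ∈ Set.Ioo (0 : ℝ) (2 * R), 0 ≤ g R r) ∧
      g R (2 * R) = 0 ∧
      Filter.Tendsto (deriv (g R)) (nhdsWithin 0 (Set.Ioi 0)) (nhds 0) ∧
      g R 0 ≤ C * (if 2 < a then 1 else if a = 2 then Real.log R else R ^ (2 - a)) := by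
  classical
  have hn5 : (5:ℝ) ≤ (n:ℝ) := by exact_mod_cast hn
  have hna : (0:ℝ) < (n:ℝ) - a := by linarith
  have hlog2 : (0:ℝ) < Real.log 2 := Real.log_pos one_lt_two
  have hlog2' : Real.log 2 ≤ 1 := by
    have := Real.log_le_sub_one_of_pos (x := 2) (by norm_num)
    linarith
  set K3 : ℝ := if 2 < a then 1/(a-2) else if a = 2 then 2 else 4/(2-a) with hK3def
  have hK3 : 0 < K3 := by
    rw [hK3def]
    split_ifs with h1 h2
    · have : 0 < a - 2 := by linarith
      positivity
    · norm_num
    · have : a < 2 := lt_of_le_of_ne (not_lt.mp h1) h2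
      have : 0 < 2 - a := by linarith
      positivity
  refine ⟨2 / Real.log 2 + K3 / ((n:ℝ) - a), by positivity, ?_⟩
  intro R hR
  have hR0 : (0:ℝ) < 2 * R := by linarith
  have hgH : ∀ r : ℝ, g R r = ∫ ρ in r..(2*R), H n a ρ := by
    intro r; rw [hg]; simp only [H, F, f]
  refine ⟨?_, ?_, ?_, ?_⟩
  · -- nonnegativity
    intro r hr
    rw [hgH]
    apply intervalIntegral.integral_nonneg hr.2.le
    intro ρ hρ
    exact H_nonneg ha0 (le_trans hr.1.le hρ.1)
  · rw [hgH]; exact intervalIntegral.integral_same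
  · -- derivative tendsto
    have hderiv : ∀ r ∈ Set.Ioo (0:ℝ) (2*R), deriv (g R) r = -(H n a r) := by
      intro r hr
      have hgfun : g R = fun u => ∫ ρ in u..(2*R), H n a ρ := funext hgH
      rw [hgfun]
      have hmeas := ((H_contOn hn ha0).mono Set.Ioi_subset_Ici_self).stronglyMeasurableAtFilter (μ := volume)
        isOpen_Ioi r hr.1
      have hcont : ContinuousAt (H n a) r :=
        (H_contOn hn ha0).continuousAt (Ici_mem_nhds hr.1)
      exact (intervalIntegral.integral_hasDerivAt_left
        (H_intble hn ha0 hr.1.le hR0.le) hmeas hcont).deriv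
    have hmem : Set.Ioo (0:ℝ) (2*R) ∈ nhdsWithin 0 (Set.Ioi 0) :=
      Ioo_mem_nhdsGT_of_mem (left_mem_Ico.mpr hR0)
    have hH0 : Filter.Tendsto (H n a) (nhdsWithin 0 (Set.Ioi 0)) (nhds 0) := by
      apply squeeze_zero' (t₀ := nhdsWithin 0 (Set.Ioi 0))
      · filter_upwards [self_mem_nhdsWithin] with ρ hρ
        exact H_nonneg ha0 (le_of_lt hρ)
      · filter_upwards [self_mem_nhdsWithin] with ρ hρ
        exact H_le hn ha0 (le_of_lt hρ)
      · have : Filter.Tendsto (fun ρ : ℝ => ρ / (n:ℝ)) (nhds 0) (nhds (0 / (n:ℝ))) :=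
          (continuous_id.div_const _).tendsto 0
        simpa using this.mono_left nhdsWithin_le_nhds
    refine Filter.Tendsto.congr' ?_ (by simpa using hH0.neg)
    filter_upwards [hmem] with r hr using (hderiv r hr).symm
  · -- the quantitative bound
    set E : ℝ := if 2 < a then 1 else if a = 2 then Real.log R else R ^ (2 - a) with hEdef
    have hlogR : Real.log 2 ≤ Real.log R := Real.log_le_log (by norm_num) hR
    have hE : Real.log 2 ≤ E := by
      rw [hEdef]
      split_ifs with h1 h2
      · linarith
      · linarith
      · have ha2 : a < 2 := lt_of_le_of_ne (not_lt.mp h1) h2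
        have : (1:ℝ) = R ^ (0:ℝ) := (Real.rpow_zero R).symm
        have h4 : R ^ (0:ℝ) ≤ R ^ (2 - a) :=
          Real.rpow_le_rpow_of_exponent_le (by linarith) (by linarith)
        rw [Real.rpow_zero] at h4
        linarith
    have h12R : (1:ℝ) ≤ 2 * R := by linarith
    have h0not : (0:ℝ) ∉ Set.uIcc 1 (2*R) := by
      rw [Set.uIcc_of_le h12R]
      rintro ⟨h, -⟩; linarith
    -- I1
    have hI1 : (∫ ρ in (1:ℝ)..(2*R), ρ ^ ((1:ℝ) - (n:ℝ))) ≤ 1 := by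
      rw [integral_rpow (Or.inr ⟨by intro h; rw [sub_eq_neg_add] at h; nlinarith, h0not⟩)]
      have ht : (0:ℝ) ≤ (2*R) ^ ((1:ℝ) - (n:ℝ) + 1) := Real.rpow_nonneg hR0.le _
      have ht2 : (2*R) ^ ((1:ℝ) - (n:ℝ) + 1) ≤ 1 :=
        Real.rpow_le_one_of_one_le_of_nonpos h12R (by linarith)
      rw [Real.one_rpow, div_le_iff_of_neg (show (1:ℝ) - (n:ℝ) + 1 < 0 by linarith)]
      linarith
    -- I2
    have hI2 : (∫ ρ in (1:ℝ)..(2*R), ρ ^ ((1:ℝ) - a)) ≤ K3 * E := by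
      rw [hK3def, hEdef]
      split_ifs with h1 h2
      · -- a > 2
        rw [integral_rpow (Or.inr ⟨by intro h; nlinarith, h0not⟩)]
        have ht : (0:ℝ) ≤ (2*R) ^ ((1:ℝ) - a + 1) := Real.rpow_nonneg hR0.le _
        have ht2 : (2*R) ^ ((1:ℝ) - a + 1) ≤ 1 :=
          Real.rpow_le_one_of_one_le_of_nonpos h12R (by linarith)
        rw [Real.one_rpow, mul_one, div_le_iff_of_neg (show (1:ℝ) - a + 1 < 0 by linarith)]
        have hm : 1/(a-2) * ((1:ℝ) - a + 1) = -1 := by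
          rw [one_div, inv_mul_eq_div, div_eq_iff (show a - 2 ≠ 0 by intro h; nlinarith)]
          ring
        linarith
      · -- a = 2
        subst h2
        have : ∀ ρ ∈ Set.uIcc (1:ℝ) (2*R), ρ ^ ((1:ℝ) - 2) = ρ⁻¹ := by
          intro ρ hρ
          rw [show (1:ℝ) - 2 = -1 by norm_num, Real.rpow_neg_one]
        rw [intervalIntegral.integral_congr this, integral_inv h0not]
        rw [div_one, Real.log_mul (by norm_num) (by linarith)]
        linarith
      · -- a < 2
        have ha2 : a < 2 := lt_of_le_of_ne (not_lt.mp h1) h2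
        rw [integral_rpow (Or.inl (by linarith))]
        have hkey : (2*R) ^ ((2:ℝ) - a) ≤ 4 * R ^ (2 - a) := by
          rw [Real.mul_rpow (by norm_num) (by linarith)]
          have h4 : (2:ℝ) ^ ((2:ℝ) - a) ≤ (2:ℝ) ^ (2:ℝ) :=
            Real.rpow_le_rpow_of_exponent_le one_le_two (by linarith)
          have h5 : (2:ℝ) ^ (2:ℝ) = 4 := by
            rw [show (2:ℝ) = ((2:ℕ):ℝ) from by norm_num]
            rw [Real.rpow_natCast]
            norm_num
          have h6 : (0:ℝ) ≤ R ^ ((2:ℝ) - a) := Real.rpow_nonneg (by linarith) _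
          nlinarith
        rw [Real.one_rpow, show (1:ℝ) - a + 1 = 2 - a by ring, div_mul_eq_mul_div,
          div_le_div_iff₀ (by linarith) (by linarith)]
        have h6 : (0:ℝ) ≤ R ^ ((2:ℝ) - a) := Real.rpow_nonneg (by linarith) _
        nlinarith
    -- bound on [0,1]
    have hA : (∫ ρ in (0:ℝ)..1, H n a ρ) ≤ 1 := by
      have h1 : (∫ ρ in (0:ℝ)..1, H n a ρ) ≤ ∫ ρ in (0:ℝ)..1, ρ / (n:ℝ) := by
        apply intervalIntegral.integral_mono_on zero_le_one
          (H_intble hn ha0 le_rfl zero_le_one)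
          ((continuous_id.div_const _).intervalIntegrable _ _)
        intro ρ hρ; exact H_le hn ha0 hρ.1
      have h2 : (∫ ρ in (0:ℝ)..1, ρ / (n:ℝ)) = (1/2) / (n:ℝ) := by
        rw [intervalIntegral.integral_div, integral_id]
        norm_num
      rw [h2] at h1
      have : (1/2 : ℝ) / (n:ℝ) ≤ 1 := by
        rw [div_le_one (by linarith)]; linarith
      linarith
    -- bound on [1,2R]
    have hB : (∫ ρ in (1:ℝ)..(2*R), H n a ρ) ≤ 1 / (n:ℝ) + (K3 * E) / ((n:ℝ) - a) := by
      have hint1 : IntervalIntegrable (fun ρ : ℝ => ρ ^ ((1:ℝ) - (n:ℝ)) / (n:ℝ)) volume 1 (2*R) :=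
        (rpow_intble le_rfl h12R).div_const _
      have hint2 : IntervalIntegrable (fun ρ : ℝ => ρ ^ ((1:ℝ) - a) / ((n:ℝ) - a)) volume 1 (2*R) :=
        (rpow_intble le_rfl h12R).div_const _
      have h1 : (∫ ρ in (1:ℝ)..(2*R), H n a ρ) ≤
          ∫ ρ in (1:ℝ)..(2*R), (ρ ^ ((1:ℝ) - (n:ℝ)) / (n:ℝ) + ρ ^ ((1:ℝ) - a) / ((n:ℝ) - a)) := by
        apply intervalIntegral.integral_mono_on h12R
          (H_intble hn ha0 zero_le_one hR0.le) (hint1.add hint2)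
        intro ρ hρ; exact H_le' hn ha0 ha3 hρ.1
      have h2 : (∫ ρ in (1:ℝ)..(2*R),
          (ρ ^ ((1:ℝ) - (n:ℝ)) / (n:ℝ) + ρ ^ ((1:ℝ) - a) / ((n:ℝ) - a))) =
          (∫ ρ in (1:ℝ)..(2*R), ρ ^ ((1:ℝ) - (n:ℝ))) / (n:ℝ) +
          (∫ ρ in (1:ℝ)..(2*R), ρ ^ ((1:ℝ) - a)) / ((n:ℝ) - a) := by
        rw [intervalIntegral.integral_add hint1 hint2,
          intervalIntegral.integral_div, intervalIntegral.integral_div]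
      rw [h2] at h1
      have h3 : (∫ ρ in (1:ℝ)..(2*R), ρ ^ ((1:ℝ) - (n:ℝ))) / (n:ℝ) ≤ 1 / (n:ℝ) := by
        rw [div_le_div_iff_of_pos_right (show (0:ℝ) < (n:ℝ) by linarith)]
        exact hI1
      have h4 : (∫ ρ in (1:ℝ)..(2*R), ρ ^ ((1:ℝ) - a)) / ((n:ℝ) - a) ≤ (K3 * E) / ((n:ℝ) - a) := by
        rw [div_le_div_iff_of_pos_right hna]
        exact hI2
      linarith
    -- combine
    have hsplit : g R 0 = (∫ ρ in (0:ℝ)..1, H n a ρ) + ∫ ρ in (1:ℝ)..(2*R), H n a ρ := by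
      rw [hgH]
      rw [intervalIntegral.integral_add_adjacent_intervals
        (H_intble hn ha0 le_rfl zero_le_one) (H_intble hn ha0 zero_le_one hR0.le)]
    have hgoal : g R 0 ≤ 1 + 1/(n:ℝ) + (K3 * E) / ((n:ℝ) - a) := by
      rw [hsplit]; linarith
    have h2E : (2:ℝ) ≤ 2 * E / Real.log 2 := by
      rw [le_div_iff₀ hlog2]; linarith
    have hRHS : (2 / Real.log 2 + K3 / ((n:ℝ) - a)) * E =
        2 * E / Real.log 2 + (K3 * E) / ((n:ℝ) - a) := by ring
    rw [hRHS]
    have hninv : 1/(n:ℝ) ≤ 1 := by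
      rw [div_le_one (by linarith)]; linarith
    linarith
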